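/- For all positive integers r and n with r even, F_{3r} * (∑_{k=1}^n L_{2rk}^3) = F_{rn} * L_{rn+r} * (5 * L_{rn} * F_{rn+r} * F_{2rn+r} + 4*(L_{2r} + 1)). -/

import Mathlib

open Finset

def L : ℕ → ℤ
  | 0 => 2
  | 1 => 1
  | n + 2 => L (n + 1) + L n

def F (n : ℕ) : ℤ := Nat.fib n

lemma F_rec (n : ℕ) : F (n + 2) = F (n + 1) + F n := by
  unfold F
  rw [Nat.fib_add_two]
  push_cast
  ring

lemma L_rec (n : ℕ) : L (n + 2) = L (n + 1) + L n := rfl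

lemma F0 : F 0 = 0 := rfl
lemma F1 : F 1 = 1 := rfl
lemma L0 : L 0 = 2 := rfl
lemma L1 : L 1 = 1 := rfl

lemma LF : ∀ n, L n = 2 * F (n + 1) - F n := by
  intro n
  induction n using Nat.twoStepInduction with
  | zero => decide
  | one => decide
  | more n ih2 ih1 =>
    have h1 := F_rec n
    have h2 := F_rec (n + 1)
    have h3 := L_rec n
    linarith

lemma LF2 : ∀ n, 2 * L (n + 1) = L n + 5 * F n := by
  intro n
  induction n using Nat.twoStepInduction with
  | zero => decide
  | one => decide
  | more n ih2 ih1 =>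
    have h1 := F_rec n
    have h3 := L_rec n
    have h4 := L_rec (n + 1)
    linarith

lemma Fadd (m : ℕ) : ∀ n, 2 * F (m + n) = F m * L n + L m * F n := by
  intro n
  induction n using Nat.twoStepInduction with
  | zero => simp [F0, L0]; ring
  | one =>
    have h := LF m
    simp only [F1, L1]
    have : m + 1 = m + 1 := rfl
    linarith
  | more n ih2 ih1 =>
    have hF : F (n + 2) = F (n + 1) + F n := F_rec n
    have hL : L (n + 2) = L (n + 1) + L n := L_rec n
    have hmF : F (m + (n + 2)) = F (m + (n + 1)) + F (m + n) := by
      have := F_rec (m + n)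
      have e1 : m + n + 2 = m + (n + 2) := by ring
      have e2 : m + n + 1 = m + (n + 1) := by ring
      rw [e1, e2] at this
      exact this
    linear_combination ih1 + ih2 - F m * hL - L m * hF + 2 * hmF

lemma Ladd (m : ℕ) : ∀ n, 2 * L (m + n) = L m * L n + 5 * F m * F n := by
  intro n
  induction n using Nat.twoStepInduction with
  | zero => simp [F0, L0]; ring
  | one =>
    have h := LF2 m
    simp only [F1, L1]
    linarith
  | more n ih2 ih1 =>
    have hF : F (n + 2) = F (n + 1) + F n := F_rec n
    have hL : L (n + 2) = L (n + 1) + L n := L_rec n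
    have hmL : L (m + (n + 2)) = L (m + (n + 1)) + L (m + n) := by
      have := L_rec (m + n)
      have e1 : m + n + 2 = m + (n + 2) := by ring
      have e2 : m + n + 1 = m + (n + 1) := by ring
      rw [e1, e2] at this
      exact this
    linear_combination ih1 + ih2 - L m * hL - 5 * F m * hF + 2 * hmL

lemma cassini : ∀ n, F (n + 1) ^ 2 - F (n + 1) * F n - F n ^ 2 = (-1 : ℤ) ^ n := by
  intro n
  induction n with
  | zero => decide
  | succ n ih =>
    have hF : F (n + 2) = F (n + 1) + F n := F_rec n
    rw [pow_succ]
    linear_combination (F (n + 2) + F n) * hF - ih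

lemma pell (m : ℕ) (hm : Even m) : L m ^ 2 = 5 * F m ^ 2 + 4 := by
  have hc := cassini m
  rw [hm.neg_one_pow] at hc
  have hl := LF m
  linear_combination (L m + 2 * F (m + 1) - F m) * hl + 4 * hc

lemma FaddQ (s t : ℕ) : ((F (s + t) : ℤ) : ℚ) = (((F s : ℤ) : ℚ) * ((L t : ℤ) : ℚ) + ((L s : ℤ) : ℚ) * ((F t : ℤ) : ℚ)) / 2 := by
  have h := Fadd s t
  have h' : (2 : ℚ) * ((F (s + t) : ℤ) : ℚ) = ((F s : ℤ) : ℚ) * ((L t : ℤ) : ℚ) + ((L s : ℤ) : ℚ) * ((F t : ℤ) : ℚ) := by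
    exact_mod_cast h
  linarith

lemma LaddQ (s t : ℕ) : ((L (s + t) : ℤ) : ℚ) = (((L s : ℤ) : ℚ) * ((L t : ℤ) : ℚ) + 5 * ((F s : ℤ) : ℚ) * ((F t : ℤ) : ℚ)) / 2 := by
  have h := Ladd s t
  have h' : (2 : ℚ) * ((L (s + t) : ℤ) : ℚ) = ((L s : ℤ) : ℚ) * ((L t : ℤ) : ℚ) + 5 * ((F s : ℤ) : ℚ) * ((F t : ℤ) : ℚ) := by
    exact_mod_cast h
  linarith

lemma pellQ (m : ℕ) (hm : Even m) : ((L m : ℤ) : ℚ) ^ 2 = 5 * ((F m : ℤ) : ℚ) ^ 2 + 4 := by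
  exact_mod_cast congrArg (fun x : ℤ => (x : ℚ)) (pell m hm)

lemma keyQ (r n : ℕ) (hre : Even r) :
    ((F (3 * r) : ℤ) : ℚ) * ((L (2 * r * (n + 1)) : ℤ) : ℚ) ^ 3 =
      ((F (r * (n + 1)) : ℤ) : ℚ) * ((L (r * (n + 1) + r) : ℤ) : ℚ) *
          (5 * ((L (r * (n + 1)) : ℤ) : ℚ) * ((F (r * (n + 1) + r) : ℤ) : ℚ) *
              ((F (2 * r * (n + 1) + r) : ℤ) : ℚ) +
            4 * (((L (2 * r) : ℤ) : ℚ) + 1)) -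
        ((F (r * n) : ℤ) : ℚ) * ((L (r * n + r) : ℤ) : ℚ) *
          (5 * ((L (r * n) : ℤ) : ℚ) * ((F (r * n + r) : ℤ) : ℚ) *
              ((F (2 * r * n + r) : ℤ) : ℚ) +
            4 * (((L (2 * r) : ℤ) : ℚ) + 1)) := by
  rw [show 2 * r * (n + 1) + r = r * n + r + (r * n + r) + r by ring,
      show 2 * r * (n + 1) = r * n + r + (r * n + r) by ring,
      show 2 * r * n + r = r * n + r * n + r by ring,
      show r * (n + 1) = r * n + r by ring,
      show 3 * r = r + r + r by ring,
      show 2 * r = r + r by ring]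
  simp only [FaddQ, LaddQ]
  have hb : ((L (r * n) : ℤ) : ℚ) ^ 2 = 5 * ((F (r * n) : ℤ) : ℚ) ^ 2 + 4 :=
    pellQ (r * n) (hre.mul_right n)
  have hd : ((L r : ℤ) : ℚ) ^ 2 = 5 * ((F r : ℤ) : ℚ) ^ 2 + 4 := pellQ r hre
  set A := ((F (r * n) : ℤ) : ℚ) with hA
  set B := ((L (r * n) : ℤ) : ℚ) with hB
  set C := ((F r : ℤ) : ℚ) with hC
  set D := ((L r : ℤ) : ℚ) with hD
  linear_combination ((-1/2 : ℚ)*C*D^2 + (-1/4 : ℚ)*C*D^4 + (3/128 : ℚ)*C*D^8 + (-5/2 : ℚ)*C^3 + (-5/2 : ℚ)*C^3*D^2 + (-5/64 : ℚ)*C^3*D^6 + (-25/4 : ℚ)*C^5 + (-25/32 : ℚ)*C^5*D^4 + (125/64 : ℚ)*C^7*D^2 + (625/128 : ℚ)*C^9 + (3/512 : ℚ)*B^2*C*D^8 + (-5/256 : ℚ)*B^2*C^3*D^6 + (-25/128 : ℚ)*B^2*C^5*D^4 + (125/256 : ℚ)*B^2*C^7*D^2 + (625/512 : ℚ)*B^2*C^9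 + (3/2048 : ℚ)*B^4*C*D^8 + (-5/1024 : ℚ)*B^4*C^3*D^6 + (-25/512 : ℚ)*B^4*C^5*D^4 + (125/1024 : ℚ)*B^4*C^7*D^2 + (625/2048 : ℚ)*B^4*C^9 + (5/4 : ℚ)*A*B*C^2*D + (25/256 : ℚ)*A*B*C^2*D^7 + (-175/256 : ℚ)*A*B*C^4*D^5 + (-125/256 : ℚ)*A*B*C^6*D^3 + (1875/256 : ℚ)*A*B*C^8*D + (5/16 : ℚ)*A*B^3*C^2*D + (25/1024 : ℚ)*A*B^3*C^2*D^7 + (-175/1024 : ℚ)*A*B^3*C^4*D^5 + (-125/1024 : ℚ)*A*B^3*C^6*D^3 + (1875/1024 : ℚ)*A*B^3*C^8*D + (15/4 : ℚ)*A^2*C*D^2 + (-15/512 : ℚ)*A^2*C*D^8 + (25/4 : ℚ)*A^2*C^3 + (175/256 : ℚ)*A^2*C^3*D^6 + (-125/32 : ℚ)*A^2*C^5*D^4 + (625/256 : ℚ)*A^2*C^7*D^2 + (9375/512 : ℚ)*A^2*C^9 + (15/16 : ℚ)*A^2*B^2*C*D^2 + (-15/1024 : ℚ)*A^2*B^2*C*D^8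 + (25/16 : ℚ)*A^2*B^2*C^3 + (25/128 : ℚ)*A^2*B^2*C^3*D^6 + (-375/512 : ℚ)*A^2*B^2*C^5*D^4 + (3125/1024 : ℚ)*A^2*B^2*C^9 + (5/8 : ℚ)*A^3*B*D^3 + (-5/512 : ℚ)*A^3*B*D^9 + (125/16 : ℚ)*A^3*B*C^2*D + (-125/1024 : ℚ)*A^3*B*C^2*D^7 + (2375/1024 : ℚ)*A^3*B*C^4*D^5 + (-9375/1024 : ℚ)*A^3*B*C^6*D^3 + (9375/1024 : ℚ)*A^3*B*C^8*D + (75/8 : ℚ)*A^4*C*D^2 + (-375/2048 : ℚ)*A^4*C*D^8 + (125/8 : ℚ)*A^4*C^3 + (2125/1024 : ℚ)*A^4*C^3*D^6 + (-3125/512 : ℚ)*A^4*C^5*D^4 + (-3125/1024 : ℚ)*A^4*C^7*D^2 + (46875/2048 : ℚ)*A^4*C^9) * hb + ((1/2 : ℚ)*C*D^2 + (3/8 : ℚ)*C*D^4 + (3/32 : ℚ)*C*D^6 + (5/2 : ℚ)*C^3 + (5/2 : ℚ)*C^3*D^2 + (5/32 : ℚ)*C^3*D^4 + (25/8 : ℚ)*C^5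 + (-75/32 : ℚ)*C^5*D^2 + (-125/32 : ℚ)*C^7 + (-1/2 : ℚ)*A*B*D + (-1/4 : ℚ)*A*B*D^3 + (25/16 : ℚ)*A*B*C^2*D^3 + (25/64 : ℚ)*A*B*C^2*D^5 + (75/16 : ℚ)*A*B*C^4*D + (-25/32 : ℚ)*A*B*C^4*D^3 + (-375/64 : ℚ)*A*B*C^6*D + (-5/2 : ℚ)*A^2*C + (-15/4 : ℚ)*A^2*C*D^2 + (-25/4 : ℚ)*A^2*C^3 + (75/8 : ℚ)*A^2*C^3*D^2 + (75/32 : ℚ)*A^2*C^3*D^4 + (125/8 : ℚ)*A^2*C^5 + (-125/16 : ℚ)*A^2*C^5*D^2 + (-625/32 : ℚ)*A^2*C^7 + (-5/8 : ℚ)*A^3*B*D^3 + (-5/32 : ℚ)*A^3*B*D^5 + (-5/128 : ℚ)*A^3*B*D^7 + (-75/8 : ℚ)*A^3*B*C^2*D + (-25/16 : ℚ)*A^3*B*C^2*D^3 + (-25/128 : ℚ)*A^3*B*C^2*D^5 + (375/32 : ℚ)*A^3*B*C^4*D + (625/128 : ℚ)*A^3*B*C^4*D^3 + (-1875/128 :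 ℚ)*A^3*B*C^6*D + (-225/16 : ℚ)*A^4*C*D^2 + (-225/64 : ℚ)*A^4*C*D^4 + (-225/256 : ℚ)*A^4*C*D^6 + (-375/16 : ℚ)*A^4*C^3 + (375/32 : ℚ)*A^4*C^3*D^2 + (1875/256 : ℚ)*A^4*C^3*D^4 + (1875/64 : ℚ)*A^4*C^5 + (-1875/256 : ℚ)*A^4*C^5*D^2 + (-9375/256 : ℚ)*A^4*C^7 + (-25/32 : ℚ)*A^5*B*D^3 + (-25/128 : ℚ)*A^5*B*D^5 + (-25/512 : ℚ)*A^5*B*D^7 + (-375/32 : ℚ)*A^5*B*C^2*D + (-125/64 : ℚ)*A^5*B*C^2*D^3 + (-125/512 : ℚ)*A^5*B*C^2*D^5 + (1875/128 : ℚ)*A^5*B*C^4*D + (3125/512 : ℚ)*A^5*B*C^4*D^3 + (-9375/512 : ℚ)*A^5*B*C^6*D + (-375/32 : ℚ)*A^6*C*D^2 + (-375/128 : ℚ)*A^6*C*D^4 + (-375/512 : ℚ)*A^6*C*D^6 + (-625/32 : ℚ)*A^6*C^3 + (625/64 : ℚ)*A^6*C^3*D^2 + (3125/512 : ℚ)*A^6*C^3*D^4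 + (3125/128 : ℚ)*A^6*C^5 + (-3125/512 : ℚ)*A^6*C^5*D^2 + (-15625/512 : ℚ)*A^6*C^7) * hd

theorem stmt17 (r n : ℕ) (hr : 0 < r) (hn : 0 < n) (hre : Even r) :
    F (3 * r) * ∑ k ∈ Finset.Icc 1 n, L (2 * r * k) ^ 3 =
      F (r * n) * L (r * n + r) * (5 * L (r * n) * F (r * n + r) * F (2 * r * n + r) + 4 * (L (2 * r) + 1)) := by
  clear hr hn
  induction n with
  | zero => simp [F]
  | succ n ih =>
    rw [Finset.sum_Icc_succ_top (by omega : (1 : ℕ) ≤ n + 1)]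
    have key : F (3 * r) * L (2 * r * (n + 1)) ^ 3 =
        F (r * (n + 1)) * L (r * (n + 1) + r) *
            (5 * L (r * (n + 1)) * F (r * (n + 1) + r) * F (2 * r * (n + 1) + r) +
              4 * (L (2 * r) + 1)) -
          F (r * n) * L (r * n + r) *
            (5 * L (r * n) * F (r * n + r) * F (2 * r * n + r) + 4 * (L (2 * r) + 1)) := by
      exact_mod_cast congrArg (fun x : ℚ => x) (keyQ r n hre)
    linear_combination ih + key
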